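/- For every λ ∈ [0,1], the robustness value r(λ) := 1 − e^{λ−1} − (e^{λ−1}−λ)·ln(1 − λe^{1−λ}) − λ(1−λ) satisfies r(λ) ≤ 1 − e^{λ−1}, with the convention r(1) = 0. -/

import Mathlib

open Real

private lemma hasDerivAt_f (c e x : ℝ) (hx : x ≠ 0) :
    HasDerivAt (fun u => u * Real.log u + c - e/2*(u-c)^2 + e^2/6*(u-c)^3)
      (Real.log x + 1 - e*(x-c) + e^2/2*(x-c)^2) x := by
  have h1 := Real.hasDerivAt_mul_log hx
  have h2 : HasDerivAt (fun u : ℝ => (u - c)^2) (2*(x-c)) x := by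
    simpa using ((hasDerivAt_id x).sub_const c).fun_pow 2
  have h3 : HasDerivAt (fun u : ℝ => (u - c)^3) (3*(x-c)^2) x := by
    simpa using ((hasDerivAt_id x).sub_const c).fun_pow 3
  have := ((h1.add_const c).sub (h2.const_mul (e/2))).add (h3.const_mul (e^2/6))
  convert this using 1
  · rfl
  · rfl
  · rfl
  ring

private lemma hasDerivAt_f' (c e x : ℝ) (hx : x ≠ 0) :
    HasDerivAt (fun u => Real.log u + 1 - e*(u-c) + e^2/2*(u-c)^2)
      (x⁻¹ - e + e^2*(x-c)) x := by
  have h1 := Real.hasDerivAt_log hx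
  have h2 : HasDerivAt (fun u : ℝ => u - c) 1 x := (hasDerivAt_id x).sub_const c
  have h3 : HasDerivAt (fun u : ℝ => (u - c)^2) (2*(x-c)) x := by
    simpa using ((hasDerivAt_id x).sub_const c).fun_pow 2
  have := ((h1.add_const 1).sub (h2.const_mul e)).add (h3.const_mul (e^2/2))
  convert this using 1
  · rfl
  · rfl
  · rfl
  ring

private lemma lemA (u : ℝ) (hu : 0 < u) (hu' : u ≤ Real.exp (-1)) :
    -(Real.exp (-1)) + Real.exp 1/2*(u - Real.exp (-1))^2
      - (Real.exp 1)^2/6*(u - Real.exp (-1))^3 ≤ u * Real.log u := by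
  set c := Real.exp (-1) with hc
  set e := Real.exp 1 with he
  have hcpos : 0 < c := Real.exp_pos _
  have hec : e * c = 1 := by
    rw [hc, he, Real.exp_neg]
    exact mul_inv_cancel₀ (Real.exp_ne_zero 1)
  set f : ℝ → ℝ := fun u => u * Real.log u + c - e/2*(u-c)^2 + e^2/6*(u-c)^3 with hf
  -- derivative at points of Icc u c is nonpositive
  have hderiv : ∀ x, 0 < x → x ≤ c → Real.log x + 1 - e*(x-c) + e^2/2*(x-c)^2 ≤ 0 := by
    intro x hx hxc
    set g : ℝ → ℝ := fun u => Real.log u + 1 - e*(u-c) + e^2/2*(u-c)^2 with hg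
    have hmono : MonotoneOn g (Set.Icc x c) := by
      apply monotoneOn_of_deriv_nonneg (convex_Icc x c)
      · intro y hy
        exact (hasDerivAt_f' c e y (ne_of_gt (lt_of_lt_of_le hx hy.1))).differentiableAt.continuousAt.continuousWithinAt
      · intro y hy
        rw [interior_Icc] at hy
        exact (hasDerivAt_f' c e y (ne_of_gt (lt_trans hx hy.1))).differentiableAt.differentiableWithinAt
      · intro y hy
        rw [interior_Icc] at hy
        obtain ⟨hy1, hy2⟩ := hy
        have hypos : 0 < y := lt_trans hx hy1
        rw [(hasDerivAt_f' c e y (ne_of_gt hypos)).deriv]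
        have : y⁻¹ - e + e^2*(y-c) = (1 - e*y)^2 / y := by
          field_simp
          linear_combination (-(e*y)) * hec
        rw [this]
        positivity
    have hx_mem : x ∈ Set.Icc x c := ⟨le_refl x, hxc⟩
    have hc_mem : c ∈ Set.Icc x c := ⟨hxc, le_refl c⟩
    have := hmono hx_mem hc_mem hxc
    have hgc : g c = 0 := by
      simp only [hg, sub_self, mul_zero, ne_eq]
      rw [hc, Real.log_exp]
      ring
    calc Real.log x + 1 - e*(x-c) + e^2/2*(x-c)^2 = g x := rfl
      _ ≤ g c := this
      _ = 0 := hgc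
  have hanti : AntitoneOn f (Set.Icc u c) := by
    apply antitoneOn_of_deriv_nonpos (convex_Icc u c)
    · intro y hy
      exact (hasDerivAt_f c e y (ne_of_gt (lt_of_lt_of_le hu hy.1))).differentiableAt.continuousAt.continuousWithinAt
    · intro y hy
      rw [interior_Icc] at hy
      exact (hasDerivAt_f c e y (ne_of_gt (lt_trans hu hy.1))).differentiableAt.differentiableWithinAt
    · intro y hy
      rw [interior_Icc] at hy
      obtain ⟨hy1, hy2⟩ := hy
      have hypos : 0 < y := lt_trans hu hy1
      rw [(hasDerivAt_f c e y (ne_of_gt hypos)).deriv]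
      exact hderiv y hypos (le_of_lt hy2)
  have := hanti ⟨le_refl u, hu'⟩ ⟨hu', le_refl c⟩ hu'
  have hfc : f c = 0 := by
    simp only [hf, sub_self]
    rw [hc, Real.log_exp]
    ring
  rw [hfc] at this
  simp only [hf] at this
  nlinarith [this]

private lemma expQuadUB (x : ℝ) (hx : x ≤ 0) : Real.exp x ≤ 1 + x + x^2/2 := by
  have hanti : AntitoneOn (fun y : ℝ => 1 + y + y^2/2 - Real.exp y) (Set.Icc x 0) := by
    apply antitoneOn_of_deriv_nonpos (convex_Icc x 0)
    · fun_prop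
    · fun_prop
    · intro y hy
      have hd : HasDerivAt (fun y : ℝ => 1 + y + y^2/2 - Real.exp y) (0 + 1 + y - Real.exp y) y := by
        have h1 : HasDerivAt (fun y : ℝ => y^2/2) y y := by
          simpa using ((hasDerivAt_id y).pow 2).div_const 2
        exact (((hasDerivAt_const y (1:ℝ)).add (hasDerivAt_id y)).add h1).sub (Real.hasDerivAt_exp y)
      rw [hd.deriv]
      have := Real.add_one_le_exp y
      linarith
  have := hanti (Set.mem_Icc.2 ⟨le_refl x, hx⟩) (Set.mem_Icc.2 ⟨hx, le_refl 0⟩) hx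
  simp [Real.exp_zero] at this
  linarith

private lemma expCubicLB (x : ℝ) (hx : x ≤ 0) : 1 + x + x^2/2 + x^3/6 ≤ Real.exp x := by
  have hanti : AntitoneOn (fun y : ℝ => Real.exp y - (1 + y + y^2/2 + y^3/6)) (Set.Icc x 0) := by
    apply antitoneOn_of_deriv_nonpos (convex_Icc x 0)
    · fun_prop
    · fun_prop
    · intro y hy
      rw [interior_Icc] at hy
      have hd : HasDerivAt (fun y : ℝ => Real.exp y - (1 + y + y^2/2 + y^3/6))
          (Real.exp y - (0 + 1 + y + y^2/2)) y := by
        have h1 : HasDerivAt (fun y : ℝ => y^2/2) y y := by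
          simpa using ((hasDerivAt_id y).pow 2).div_const 2
        have h2 : HasDerivAt (fun y : ℝ => y^3/6) (y^2/2) y := by
          have h := ((hasDerivAt_id y).fun_pow 3).div_const 6
          convert h using 1
          · rfl
          · rfl
          · rfl
          simp
          ring
        exact (Real.hasDerivAt_exp y).sub ((((hasDerivAt_const y (1:ℝ)).add (hasDerivAt_id y)).add h1).add h2)
      rw [hd.deriv]
      have := expQuadUB y (le_of_lt hy.2)
      linarith
  have := hanti (Set.mem_Icc.2 ⟨le_refl x, hx⟩) (Set.mem_Icc.2 ⟨hx, le_refl 0⟩) hx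
  simp [Real.exp_zero] at this
  linarith

private lemma expSumBound (l : ℝ) (h0 : 0 ≤ l) (h1 : l ≤ 1) :
    |Real.exp l - (1 + l + l^2/2 + l^3/6 + l^4/24)| ≤ l^5/100 := by
  have h := Real.exp_bound (x := l) (by rwa [abs_of_nonneg h0]) (n := 5) (by norm_num)
  have hs : ∑ m ∈ Finset.range 5, l ^ m / (Nat.factorial m : ℝ) = 1 + l + l^2/2 + l^3/6 + l^4/24 := by
    simp [Finset.sum_range_succ, Nat.factorial]
  rw [hs, abs_of_nonneg h0] at h
  calc |Real.exp l - (1 + l + l^2/2 + l^3/6 + l^4/24)| ≤ l^5 * (6/(120*5)) := by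
        convert h using 2 <;> norm_num [Nat.factorial]
    _ = l^5/100 := by ring

private lemma cLB : (36787/100000 : ℝ) ≤ Real.exp (-1) := by
  rw [Real.exp_neg]
  have h := mul_pos (show (0:ℝ) < 2.7182818286 - Real.exp 1 by linarith [Real.exp_one_lt_d9])
    (inv_pos.2 (Real.exp_pos 1))
  have hinv : Real.exp 1 * (Real.exp 1)⁻¹ = 1 := mul_inv_cancel₀ (Real.exp_ne_zero 1)
  nlinarith [h, hinv]

private lemma cUB : Real.exp (-1) ≤ (36789/100000 : ℝ) := by
  rw [Real.exp_neg]
  have h := mul_pos (show (0:ℝ) < Real.exp 1 - 2.7182818283 by linarith [Real.exp_one_gt_d9])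
    (inv_pos.2 (Real.exp_pos 1))
  have hinv : Real.exp 1 * (Real.exp 1)⁻¹ = 1 := mul_inv_cancel₀ (Real.exp_ne_zero 1)
  nlinarith [h, hinv]

private lemma polyCert (l : ℝ) (h0 : 0 ≤ l) (h1 : l ≤ 3/4) :
    0 ≤ 6*(36789/100000 : ℝ)^3*((1-l)*(1+l+l^2/2+l^3/6+l^4/24-l^5/100)-1)
      + 3*(36787/100000)*(l-36789/100000*(l+l^2/2+l^3/6+l^4/24+l^5/100))^2
      + (l-36789/100000*(l+l^2/2+l^3/6+l^4/24+l^5/100))^3 := by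
  have hT : 0 ≤ 3/4 - l := by linarith
  have H : ∀ i j : ℕ, 0 ≤ l^i * (3/4 - l)^j := fun i j =>
    mul_nonneg (pow_nonneg h0 i) (pow_nonneg hT j)
  linarith [H 2 13, H 3 12, H 4 11, H 5 10, H 6 9, H 7 8, H 8 7, H 9 6, H 10 5,
    H 11 4, H 12 3, H 13 2, H 14 1, H 15 0]

set_option maxHeartbeats 1000000 in
private lemma regionA (l : ℝ) (h0 : 0 ≤ l) (h34 : l ≤ 3/4) (t : ℝ)
    (htdef : t = Real.exp (l-1) - l) (ht : 0 < t) :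
    0 ≤ t * Real.log t + (1-l) * Real.exp (l-1) := by
  set c := Real.exp (-1) with hc
  set E := Real.exp l with hE
  clear_value c E
  have hcpos : 0 < c := by rw [hc]; exact Real.exp_pos _
  have hc1 : (36787/100000 : ℝ) ≤ c := by rw [hc]; exact cLB
  have hc2 : c ≤ (36789/100000 : ℝ) := by rw [hc]; exact cUB
  have hyE : Real.exp (l-1) = c * E := by
    rw [hc, hE, ← Real.exp_add]; congr 1; ring
  have hEb := expSumBound l h0 (by linarith)
  rw [abs_le] at hEb
  have hE1 : 1+l+l^2/2+l^3/6+l^4/24 - l^5/100 ≤ E := by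
    have h := hEb.1; rw [← hE] at h; linarith
  have hE2 : E ≤ 1+l+l^2/2+l^3/6+l^4/24 + l^5/100 := by
    have h := hEb.2; rw [← hE] at h; linarith
  set w : ℝ := l + c - c*E with hw
  clear_value w
  have hB1nn : (0:ℝ) ≤ l+l^2/2+l^3/6+l^4/24+l^5/100 := by positivity
  have hw_lb : l - 36789/100000*(l+l^2/2+l^3/6+l^4/24+l^5/100) ≤ w := by
    rw [hw]
    have k1 := mul_le_mul_of_nonneg_left hE2 hcpos.le
    have k2 := mul_le_mul_of_nonneg_right hc2 hB1nn
    nlinarith [k1, k2]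
  have hT : (0:ℝ) ≤ 3/4 - l := by linarith
  have HP : ∀ i : ℕ, 0 ≤ l^i * (3/4 - l) := fun i => mul_nonneg (pow_nonneg h0 i) hT
  have hw1nn : 0 ≤ l - 36789/100000*(l+l^2/2+l^3/6+l^4/24+l^5/100) := by
    linarith [HP 1, HP 2, HP 3, HP 4, h0]
  have hwnn : 0 ≤ w := le_trans hw1nn hw_lb
  have htw : t - c = -w := by rw [htdef, hyE, hw]; ring
  have htc : t ≤ c := by linarith
  have hlem := lemA t ht (hc ▸ htc)
  have he1 : Real.exp 1 = c⁻¹ := by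
    rw [hc, ← Real.exp_neg]; norm_num
  rw [he1, ← hc, htw] at hlem
  -- hlem : -c + c⁻¹/2*(-w)^2 - (c⁻¹)^2/6*(-w)^3 ≤ t * log t
  have hAle : (1-l)*(1+l+l^2/2+l^3/6+l^4/24-l^5/100) - 1 ≤ (1-l)*E - 1 := by
    have := mul_le_mul_of_nonneg_left hE1 (show (0:ℝ) ≤ 1 - l by linarith)
    linarith
  have hAneg : (1-l)*(1+l+l^2/2+l^3/6+l^4/24-l^5/100) - 1 ≤ 0 := by
    linarith [HP 5, pow_nonneg h0 2, pow_nonneg h0 3, pow_nonneg h0 4, pow_nonneg h0 5]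
  have hcc : c^3 ≤ (36789/100000 : ℝ)^3 := pow_le_pow_left₀ hcpos.le hc2 3
  have h6c : 6*(36789/100000 : ℝ)^3*((1-l)*(1+l+l^2/2+l^3/6+l^4/24-l^5/100)-1) ≤ 6*c^3*((1-l)*E-1) := by
    have s1 : 6*c^3*((1-l)*(1+l+l^2/2+l^3/6+l^4/24-l^5/100)-1) ≤ 6*c^3*((1-l)*E-1) :=
      mul_le_mul_of_nonneg_left hAle (by positivity)
    have s2 : 6*(36789/100000 : ℝ)^3*((1-l)*(1+l+l^2/2+l^3/6+l^4/24-l^5/100)-1)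
        ≤ 6*c^3*((1-l)*(1+l+l^2/2+l^3/6+l^4/24-l^5/100)-1) := by
      have := mul_le_mul_of_nonpos_right hcc hAneg
      linarith
    linarith
  have h3c : 3*(36787/100000 : ℝ)*(l-36789/100000*(l+l^2/2+l^3/6+l^4/24+l^5/100))^2
      + (l-36789/100000*(l+l^2/2+l^3/6+l^4/24+l^5/100))^3 ≤ 3*c*w^2 + w^3 := by
    have hsq := pow_le_pow_left₀ hw1nn hw_lb 2
    have hcube := pow_le_pow_left₀ hw1nn hw_lb 3
    have := mul_le_mul_of_nonneg_right hc1 (sq_nonneg w)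
    linarith
  have hckey : 0 ≤ 6*c^3*((1-l)*E - 1) + 3*c*w^2 + w^3 := by
    linarith [polyCert l h0 h34, h6c, h3c]
  have hfrac : (1-l)*(c*E) - c + c⁻¹/2*(-w)^2 - (c⁻¹)^2/6*(-w)^3
      = (6*c^3*((1-l)*E - 1) + 3*c*w^2 + w^3) / (6*c^2) := by
    field_simp
    ring
  have hnum : 0 ≤ (1-l)*(c*E) - c + c⁻¹/2*(-w)^2 - (c⁻¹)^2/6*(-w)^3 := by
    rw [hfrac]
    positivity
  rw [hyE]
  linarith [hlem, hnum]

set_option maxHeartbeats 1000000 in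
private lemma regionB (l : ℝ) (h34 : 3/4 ≤ l) (hl1 : l < 1) (t : ℝ)
    (htdef : t = Real.exp (l-1) - l) (ht : 0 < t) :
    0 ≤ t * Real.log t + (1-l) * Real.exp (l-1) := by
  have hε0 : 0 < 1 - l := by linarith
  have hε14 : 1 - l ≤ 1/4 := by linarith
  have hy_ub := expQuadUB (l-1) (by linarith)
  have hy_lb := expCubicLB (l-1) (by linarith)
  have hq : t ≤ (1-l)^2/2 := by rw [htdef]; nlinarith [hy_ub]
  have hql : 11/24*(1-l)^2 ≤ t := by
    rw [htdef]
    nlinarith [hy_lb, mul_nonneg (mul_nonneg hε0.le hε0.le) (show (0:ℝ) ≤ 1/4 - (1-l) by linarith)]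
  set r := Real.sqrt (1-l) with hr
  clear_value r
  have hr2 : r^2 = 1 - l := by rw [hr]; exact Real.sq_sqrt hε0.le
  have hrpos : 0 < r := by rw [hr]; exact Real.sqrt_pos.2 hε0
  have hr12 : r ≤ 1/2 := by nlinarith [hr2, hrpos]
  have hlogr : 1 - 1/r ≤ Real.log r := by
    have h := Real.log_le_sub_one_of_pos (show 0 < r⁻¹ by positivity)
    rw [Real.log_inv] at h
    rw [show (1:ℝ)/r = r⁻¹ by rw [one_div]]
    linarith
  have hlog1124 : -(13/11 : ℝ) ≤ Real.log (11/24 : ℝ) := by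
    have h := Real.log_le_sub_one_of_pos (show (0:ℝ) < 24/11 by norm_num)
    have h2 : Real.log (11/24 : ℝ) = -Real.log (24/11 : ℝ) := by
      rw [← Real.log_inv]; norm_num
    rw [h2]; linarith
  have hlogt : -13/11 + 4 - 4*(1/r) ≤ Real.log t := by
    have h1 : Real.log (11/24*(1-l)^2) ≤ Real.log t :=
      Real.log_le_log (by positivity) hql
    have h2 : Real.log (11/24*(1-l)^2) = Real.log (11/24 : ℝ) + 4 * Real.log r := by
      rw [← hr2, Real.log_mul (by norm_num) (by positivity),
        show ((r^2)^2 : ℝ) = r^4 by ring, Real.log_pow]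
      norm_num
    have h3 : 4 * (1 - 1/r) ≤ 4 * Real.log r := by linarith
    linarith
  have hm : -13/11 + 4 - 4*(1/r) ≤ 0 := by
    have h8 : (8:ℝ) ≤ 4*(1/r) := by
      rw [show (4:ℝ)*(1/r) = 4/r by ring, le_div_iff₀ hrpos]; linarith
    linarith
  have htlog : ((1-l)^2/2) * (-13/11 + 4 - 4*(1/r)) ≤ t * Real.log t := by
    calc ((1-l)^2/2) * (-13/11+4-4*(1/r)) ≤ t * (-13/11+4-4*(1/r)) :=
          mul_le_mul_of_nonpos_right hq hm
      _ ≤ t * Real.log t := mul_le_mul_of_nonneg_left hlogt ht.le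
  have hy_l : l ≤ Real.exp (l-1) := by linarith [Real.add_one_le_exp (l-1)]
  have hyl2 : (1-l)*l ≤ (1-l)*Real.exp (l-1) := mul_le_mul_of_nonneg_left hy_l hε0.le
  have hl' : l = 1 - r^2 := by linarith [hr2]
  have heq : ((1-l)^2/2) * (-13/11+4-4*(1/r)) + (1-l)*l = r^2 - 2*r^3 + (9/22)*r^4 := by
    rw [hl']
    field_simp
    ring
  have key : 0 ≤ r^2 - 2*r^3 + (9/22)*r^4 := by
    have c1 : 0 ≤ r^2*(1-2*r)^2 := mul_nonneg (sq_nonneg r) (sq_nonneg _)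
    have c2 : 0 ≤ r^3*(1-2*r) := mul_nonneg (pow_nonneg hrpos.le 3) (by linarith)
    have c3 : 0 ≤ r^4 := pow_nonneg hrpos.le 4
    nlinarith [c1, c2, c3]
  linarith [htlog, hyl2, heq, key]

theorem stmt_12 (l : ℝ) (hl : l ∈ Set.Icc (0 : ℝ) 1) :
    1 - Real.exp (l - 1) - (Real.exp (l - 1) - l) * Real.log (1 - l * Real.exp (1 - l))
      - l * (1 - l) ≤ 1 - Real.exp (l - 1) := by
  obtain ⟨hl0, hl1⟩ := hl
  rcases eq_or_lt_of_le hl1 with rfl | hl1'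
  · norm_num
  · set t := Real.exp (l - 1) - l with htdef
    clear_value t
    have ht : 0 < t := by
      have := Real.add_one_lt_exp (show l - 1 ≠ 0 by intro h; linarith)
      rw [htdef]; linarith
    have hrw : Real.log (1 - l * Real.exp (1 - l)) = Real.log t + (1 - l) := by
      have hprod : Real.exp (1-l) * Real.exp (l-1) = 1 := by
        rw [← Real.exp_add]; norm_num
      have h1 : 1 - l * Real.exp (1-l) = t * Real.exp (1-l) := by
        rw [htdef]; nlinarith [hprod]
      rw [h1, Real.log_mul (ne_of_gt ht) (Real.exp_ne_zero _), Real.log_exp]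
    have key : 0 ≤ t * Real.log t + (1-l) * Real.exp (l-1) := by
      rcases le_or_gt l (3/4) with h34 | h34
      · exact regionA l hl0 h34 t htdef ht
      · exact regionB l h34.le hl1' t htdef ht
    have hexpand : t * Real.log (1 - l * Real.exp (1-l)) + l*(1-l)
        = t * Real.log t + (1-l) * Real.exp (l-1) := by
      rw [hrw, htdef]; ring
    linarith [hexpand, key]
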